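/- For every n ≥ 2 and R ≥ 0, the image of the configuration space M_n(R) under the projection (C, J_1, …, J_n) ↦ C is exactly the curved n-gon D = {C ∈ ℝ² : |C − B_k| ≤ 2 for all k = 1,…,n}; that is, a point C ∈ ℝ² is the body of some configuration in M_n(R) if and only if |C − B_k| ≤ 2 for every k. -/

import Mathlib

/-- Euclidean norm of a vector in ℝ². -/
noncomputable def enorm2 (v : ℝ × ℝ) : ℝ := Real.sqrt (v.1 ^ 2 + v.2 ^ 2)

/-- The k-th fixed endpoint `B_k = (R cos(2kπ/n), R sin(2kπ/n))` (indices from 0). -/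
noncomputable def Bpt (n : ℕ) (R : ℝ) (k : Fin n) : ℝ × ℝ :=
  (R * Real.cos (2 * (k.val : ℝ) * Real.pi / (n : ℝ)),
   R * Real.sin (2 * (k.val : ℝ) * Real.pi / (n : ℝ)))

/-- The configuration space `M_n(R)` of spiders with `n` arms of radius `R`,
as a subset of `(ℝ²)^{n+1} ≅ ℝ^{2n+2}`: a pair `(C, J)` with
`|C − J_k| = 1` and `|J_k − B_k| = 1` for all `k`. -/
noncomputable def MSpace (n : ℕ) (R : ℝ) : Set ((ℝ × ℝ) × (Fin n → ℝ × ℝ)) :=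
  {x | ∀ k : Fin n, enorm2 (x.1 - x.2 k) = 1 ∧ enorm2 (x.2 k - Bpt n R k) = 1}

/-- `d_n`, the maximum distance between `n`-th roots of unity. -/
noncomputable def dmax (n : ℕ) : ℝ :=
  if Even n then 2
  else Real.sqrt (2 - 2 * Real.cos (2 * ((n / 2 : ℕ) : ℝ) * Real.pi / (n : ℝ)))

/-- The critical radius `R_n = 2 / d_n`. -/
noncomputable def Rcrit (n : ℕ) : ℝ := 2 / dmax n

/-- For every `n ≥ 2` and `R ≥ 0`, the image of `M_n(R)` under the body projection
`(C, J_1, …, J_n) ↦ C` is exactly the curved n-gon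
`D = {C : |C − B_k| ≤ 2 for all k}`. -/
lemma enorm2_eq (v : ℝ × ℝ) : enorm2 v = ‖(⟨v.1, v.2⟩ : ℂ)‖ := by
  rw [enorm2, Complex.norm_def, Complex.normSq_mk]; ring_nf

lemma enorm2_triangle (a b : ℝ × ℝ) : enorm2 (a + b) ≤ enorm2 a + enorm2 b := by
  rw [enorm2_eq, enorm2_eq, enorm2_eq]
  have h : (⟨(a+b).1, (a+b).2⟩ : ℂ) = ⟨a.1,a.2⟩ + ⟨b.1,b.2⟩ := by
    simp [Complex.ext_iff]
  rw [h]
  exact norm_add_le _ _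

lemma enorm2_neg (a : ℝ × ℝ) : enorm2 (-a) = enorm2 a := by
  simp [enorm2]

lemma exists_joint (v : ℝ × ℝ) (hv : enorm2 v ≤ 2) :
    ∃ j : ℝ × ℝ, enorm2 j = 1 ∧ enorm2 (v - j) = 1 := by
  have hd2nn : (0:ℝ) ≤ v.1 ^ 2 + v.2 ^ 2 := by positivity
  have hv' : Real.sqrt (v.1 ^ 2 + v.2 ^ 2) ≤ 2 := hv
  have hd2le : v.1 ^ 2 + v.2 ^ 2 ≤ 4 := by
    nlinarith [Real.sq_sqrt hd2nn, Real.sqrt_nonneg (v.1 ^ 2 + v.2 ^ 2), hv']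
  rcases eq_or_lt_of_le hd2nn with h0 | h0
  · have h1 : v.1 = 0 := by nlinarith
    have h2 : v.2 = 0 := by nlinarith
    refine ⟨(1, 0), ?_, ?_⟩ <;> simp [enorm2, Prod.sub_def, h1, h2]
  · set d := Real.sqrt (v.1 ^ 2 + v.2 ^ 2) with hdDef
    have hd : 0 < d := Real.sqrt_pos.mpr h0
    have hdsq : d ^ 2 = v.1 ^ 2 + v.2 ^ 2 := Real.sq_sqrt hd2nn
    set h := Real.sqrt (1 - (v.1 ^ 2 + v.2 ^ 2) / 4) with hhDef
    have hhsq : h ^ 2 = 1 - (v.1 ^ 2 + v.2 ^ 2) / 4 :=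
      Real.sq_sqrt (by linarith)
    refine ⟨(v.1/2 - h*v.2/d, v.2/2 + h*v.1/d), ?_, ?_⟩
    · show Real.sqrt _ = 1
      rw [show ((v.1/2 - h*v.2/d, v.2/2 + h*v.1/d) : ℝ × ℝ).1 = v.1/2 - h*v.2/d from rfl,
          show ((v.1/2 - h*v.2/d, v.2/2 + h*v.1/d) : ℝ × ℝ).2 = v.2/2 + h*v.1/d from rfl]
      have : (v.1/2 - h*v.2/d)^2 + (v.2/2 + h*v.1/d)^2 = 1 := by
        field_simp
        nlinarith [hdsq, hhsq, hd]
      rw [this, Real.sqrt_one]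
    · show Real.sqrt _ = 1
      have e1 : (v - (v.1/2 - h*v.2/d, v.2/2 + h*v.1/d)).1 = v.1/2 + h*v.2/d := by
        simp [Prod.sub_def]; ring
      have e2 : (v - (v.1/2 - h*v.2/d, v.2/2 + h*v.1/d)).2 = v.2/2 - h*v.1/d := by
        simp [Prod.sub_def]; ring
      rw [e1, e2]
      have : (v.1/2 + h*v.2/d)^2 + (v.2/2 - h*v.1/d)^2 = 1 := by
        field_simp
        nlinarith [hdsq, hhsq, hd]
      rw [this, Real.sqrt_one]

theorem stmt16 (n : ℕ) (hn : 2 ≤ n) (R : ℝ) (hR : 0 ≤ R) :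
    (fun x : (ℝ × ℝ) × (Fin n → ℝ × ℝ) => x.1) '' MSpace n R =
      {C : ℝ × ℝ | ∀ k : Fin n, enorm2 (C - Bpt n R k) ≤ 2} := by
  ext C
  constructor
  · rintro ⟨⟨C', J⟩, hM, rfl⟩
    intro k
    obtain ⟨h1, h2⟩ := hM k
    have ht := enorm2_triangle (C' - J k) (J k - Bpt n R k)
    rw [sub_add_sub_cancel] at ht
    rw [h1, h2] at ht; linarith
  · intro hC
    have key : ∀ k : Fin n, ∃ j : ℝ × ℝ,
        enorm2 j = 1 ∧ enorm2 (Bpt n R k - C - j) = 1 := by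
      intro k
      apply exists_joint
      rw [show Bpt n R k - C = -(C - Bpt n R k) by ring, enorm2_neg]
      exact hC k
    choose j hj1 hj2 using key
    refine ⟨(C, fun k => C + j k), fun k => ⟨?_, ?_⟩, rfl⟩
    · rw [show C - (C + j k) = -(j k) by ring, enorm2_neg]
      exact hj1 k
    · rw [show C + j k - Bpt n R k = -(Bpt n R k - C - j k) by ring, enorm2_neg]
      exact hj2 k
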